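/- Fix p ∈ (1/2, 1). Then as n → ∞, (2p)^{−2n−2} (1−2p)² · Σ_{d=1}^n 2^d · g_{p,n}(d) · (p^{−d} − 1)/d converges to log(2p/(2p−1)) − log 2 = log(p/(2p−1)). -/

import Mathlib

open Finset Filter

noncomputable section
open scoped Classical

/-- Edges on the path from the root to vertex `v`, in heap indexing of the infinite binary
tree: the root is `0`, the children of `v` are `2v+1` and `2v+2`, and each non-root vertex
is identified with the edge joining it to its parent `(v−1)/2`. -/
def pathSet : ℕ → Finset ℕ
  | 0 => ∅
  | (v + 1) => insert (v + 1) (pathSet (v / 2))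
decreasing_by exact Nat.lt_succ_of_le (Nat.div_le_self v 2)

/-- The depth of vertex `v`. -/
def depth (v : ℕ) : ℕ := Nat.log2 (v + 1)

/-- The edge set B_n of the perfect binary tree of depth `n` (its vertex set is
{0,…,2^{n+1}−2} and each non-root vertex is identified with the edge to its parent),
so |B_n| = 2^{n+1} − 2. -/
def Eset (n : ℕ) : Finset ℕ := Finset.Icc 1 (2 ^ (n + 1) - 2)

/-- ν_p = √((1-p)/p). -/
def nu (p : ℝ) : ℝ := Real.sqrt ((1 - p) / p)

/-- Ψ_A^{p,B_n}(x) = Π_{i∈A} x_i ν_p^{x_i}: a configuration is encoded by the set `x` of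
open edges; the factor is ν_p when the edge is open (+1) and −ν_p⁻¹ when closed (−1). -/
def PsiT (p : ℝ) (A x : Finset ℕ) : ℝ :=
  ∏ i ∈ A, (if i ∈ x then nu p else -(nu p)⁻¹)

/-- The Bernoulli product measure π_{p,B_n} of the configuration with open-edge set `x`. -/
def piT (p : ℝ) (n : ℕ) (x : Finset ℕ) : ℝ :=
  p ^ x.card * (1 - p) ^ ((Eset n).card - x.card)

/-- The inner product ⟨f,g⟩_{p,B_n} = Σ_{x⊆B_n} f(x) g(x) π_{p,B_n}(x). -/
def innT (p : ℝ) (n : ℕ) (f g : Finset ℕ → ℝ) : ℝ :=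
  ∑ x ∈ (Eset n).powerset, f x * g x * piT p n x

/-- The cluster-size function f_n(x) = Σ_{v∈V_n} Π_{e∈P_v} (1+x_e)/2: the number of
vertices of the depth-n perfect binary tree joined to the root by open edges. -/
def fcl (n : ℕ) (x : Finset ℕ) : ℝ :=
  ∑ v ∈ Finset.range (2 ^ (n + 1) - 1), ∏ e ∈ pathSet v, (if e ∈ x then (1 : ℝ) else 0)

/-- var_p(f_n) = Σ_{∅≠A⊆B_n} ⟨f_n,Ψ_A⟩². -/
def varT (p : ℝ) (n : ℕ) : ℝ :=
  ∑ A ∈ (Eset n).powerset.filter (fun A => A.Nonempty), (innT p n (fcl n) (PsiT p A)) ^ 2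

/-- g_{p,n}(d). -/
def gtree (p : ℝ) (n d : ℕ) : ℝ :=
  if p = 1 / 2 then ((2 : ℝ) ^ (2 * d))⁻¹ * ((n + 1 - d : ℕ) : ℝ) ^ 2
  else p ^ (2 * d) * ((1 - (2 * p) ^ (n + 1 - d)) / (1 - 2 * p)) ^ 2

/-- for fixed p ∈ (1/2,1),
(2p)^{−2n−2}(1−2p)² Σ_{d=1}^n 2^d g_{p,n}(d) (p^{−d}−1)/d → log(2p/(2p−1)) − log 2
= log(p/(2p−1)) as n → ∞. -/
theorem tree_supercritical_tau_sum_limit (p : ℝ) (hp0 : 1 / 2 < p) (hp1 : p < 1) :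
    Tendsto (fun n => ((2 * p) ^ (2 * n + 2))⁻¹ * (1 - 2 * p) ^ 2 *
        ∑ d ∈ Finset.Icc 1 n, (2 : ℝ) ^ d * gtree p n d * ((p ^ d)⁻¹ - 1) / (d : ℝ))
      atTop (nhds (Real.log (2 * p / (2 * p - 1)) - Real.log 2)) := by
  have hp : (0:ℝ) < p := by linarith
  have hq1 : (1:ℝ) < 2*p := by linarith
  have hq0 : (0:ℝ) < 2*p := by linarith
  have hqne : (2:ℝ)*p ≠ 0 := ne_of_gt hq0
  have h1q : (1:ℝ) - 2*p ≠ 0 := by intro h; nlinarith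
  have hr0 : (0:ℝ) ≤ (2*p)⁻¹ := by positivity
  have hr1 : ((2*p):ℝ)⁻¹ < 1 := by rw [inv_lt_one_iff₀]; right; exact hq1
  set A : ℕ → ℝ := fun n => ∑ d ∈ Finset.Icc 1 n, (((2*p)⁻¹) ^ d / (d:ℝ) - ((2:ℝ)⁻¹) ^ d / (d:ℝ)) with hA
  set B : ℕ → ℝ := fun n => ∑ d ∈ Finset.Icc 1 n, 2 * (1 - p ^ d) / (d:ℝ) * ((2*p)⁻¹) ^ (n+1) with hB
  set C : ℕ → ℝ := fun n => ∑ d ∈ Finset.Icc 1 n, (1 - p ^ d) / (d:ℝ) * (2*p) ^ d * ((2*p)⁻¹) ^ (2*n+2) with hC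
  have key : ∀ n : ℕ, ((2 * p) ^ (2 * n + 2))⁻¹ * (1 - 2 * p) ^ 2 *
      ∑ d ∈ Finset.Icc 1 n, (2 : ℝ) ^ d * gtree p n d * ((p ^ d)⁻¹ - 1) / (d : ℝ)
      = A n - B n + C n := by
    intro n
    rw [Finset.mul_sum, hA, hB, hC, ← Finset.sum_sub_distrib, ← Finset.sum_add_distrib]
    refine Finset.sum_congr rfl fun d hd => ?_
    obtain ⟨hd1, hdn⟩ := Finset.mem_Icc.mp hd
    have hdne : (d:ℝ) ≠ 0 := Nat.cast_ne_zero.mpr (by omega)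
    rw [gtree, if_neg (by intro h; rw [h] at hp0; exact lt_irrefl _ hp0)]
    set m := n + 1 - d with hmdef
    have e1 : (2*p) ^ (2*n+2) = (2*p) ^ (2*d) * (2*p) ^ (2*m) := by
      rw [← pow_add]; congr 1; omega
    have e2 : ((2*p)⁻¹ : ℝ) ^ (n+1) = ((2*p)⁻¹) ^ d * ((2*p)⁻¹) ^ m := by
      rw [← pow_add]; congr 1; omega
    have e4 : ((2*p)⁻¹ : ℝ) ^ (2*n+2) = ((2*p)⁻¹) ^ (2*d) * ((2*p)⁻¹) ^ (2*m) := by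
      rw [← pow_add]; congr 1; omega
    rw [e1, e2, e4]
    simp only [inv_pow]
    field_simp
    ring
  have hnr : Tendsto (fun n : ℕ => (n:ℝ) * ((2*p)⁻¹) ^ n) atTop (nhds 0) := by
    have := (summable_pow_mul_geometric_of_norm_lt_one (R := ℝ) 1
      (by rwa [Real.norm_eq_abs, abs_of_nonneg hr0])).tendsto_atTop_zero
    simpa using this
  have htA : Tendsto A atTop (nhds (Real.log (2 * p / (2 * p - 1)) - Real.log 2)) := by
    have h1 : HasSum (fun k : ℕ => ((2*p)⁻¹) ^ (k + 1) / ((k:ℝ) + 1))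
        (-Real.log (1 - (2*p)⁻¹)) :=
      Real.hasSum_pow_div_log_of_abs_lt_one (by rw [abs_of_nonneg hr0]; exact hr1)
    have h2 : HasSum (fun k : ℕ => ((2:ℝ)⁻¹) ^ (k + 1) / ((k:ℝ) + 1))
        (-Real.log (1 - (2:ℝ)⁻¹)) :=
      Real.hasSum_pow_div_log_of_abs_lt_one (by rw [abs_of_nonneg (by norm_num)]; norm_num)
    have ht := (h1.sub h2).tendsto_sum_nat
    have heq : ∀ n : ℕ, A n = ∑ i ∈ Finset.range n,
        (((2*p)⁻¹) ^ (i + 1) / ((i:ℝ) + 1) - ((2:ℝ)⁻¹) ^ (i + 1) / ((i:ℝ) + 1)) := by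
      intro n
      rw [hA]
      simp only [← Finset.Ico_add_one_right_eq_Icc, Finset.sum_Ico_eq_sum_range,
        Nat.add_sub_cancel]
      refine Finset.sum_congr rfl fun i _ => ?_
      push_cast
      ring
    have hval : -Real.log (1 - (2*p)⁻¹) - -Real.log (1 - (2:ℝ)⁻¹)
        = Real.log (2 * p / (2 * p - 1)) - Real.log 2 := by
      have e : (1:ℝ) - (2*p)⁻¹ = (2*p - 1) / (2*p) := by field_simp
      have e2 : (1:ℝ) - (2:ℝ)⁻¹ = 2⁻¹ := by norm_num
      rw [e, e2, Real.log_div (by linarith) hqne, Real.log_inv,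
        Real.log_div hqne (by linarith)]
      ring
    rw [← hval]
    exact Tendsto.congr (fun n => (heq n).symm) ht
  have htB : Tendsto B atTop (nhds 0) := by
    apply squeeze_zero_norm (a := fun n : ℕ => ((n:ℝ) * ((2*p)⁻¹) ^ n) * (2 * (2*p)⁻¹))
    · intro n
      have h1 : ‖B n‖ ≤ ∑ d ∈ Finset.Icc 1 n, 2 * ((2*p)⁻¹) ^ (n+1) := by
        refine (norm_sum_le _ _).trans (Finset.sum_le_sum fun d hd => ?_)
        obtain ⟨hd1, hdn⟩ := Finset.mem_Icc.mp hd
        have hpd : p ^ d ≤ 1 := pow_le_one₀ hp.le hp1.le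
        have hd0 : (1:ℝ) ≤ (d:ℝ) := by exact_mod_cast hd1
        have hrp : (0:ℝ) ≤ ((2*p)⁻¹) ^ (n+1) := by positivity
        rw [Real.norm_eq_abs,
          abs_of_nonneg (mul_nonneg (div_nonneg (by linarith) (by linarith)) hrp)]
        have hfac : 2 * (1 - p ^ d) / (d:ℝ) ≤ 2 := by
          rw [div_le_iff₀ (by linarith)]
          nlinarith [pow_nonneg hp.le d]
        exact mul_le_mul_of_nonneg_right hfac hrp
      have h2 : ∑ d ∈ Finset.Icc 1 n, 2 * ((2*p)⁻¹) ^ (n+1)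
          = ((n:ℝ) * ((2*p)⁻¹) ^ n) * (2 * (2*p)⁻¹) := by
        rw [Finset.sum_const, Nat.card_Icc]
        simp only [Nat.add_sub_cancel, nsmul_eq_mul]
        ring
      exact h2 ▸ h1
    · simpa using hnr.mul_const (2 * (2*p)⁻¹)
  have htC : Tendsto C atTop (nhds 0) := by
    apply squeeze_zero_norm (a := fun n : ℕ => ((n:ℝ) * ((2*p)⁻¹) ^ n) * ((2*p)⁻¹) ^ 2)
    · intro n
      have hqr : (2*p) ^ n * ((2*p)⁻¹) ^ (2*n+2) = ((2*p)⁻¹) ^ (n+2) := by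
        rw [show 2*n+2 = n + (n+2) from by ring, pow_add, ← mul_assoc, ← mul_pow,
          mul_inv_cancel₀ hqne, one_pow, one_mul]
      have h1 : ‖C n‖ ≤ ∑ d ∈ Finset.Icc 1 n, (2*p) ^ n * ((2*p)⁻¹) ^ (2*n+2) := by
        refine (norm_sum_le _ _).trans (Finset.sum_le_sum fun d hd => ?_)
        obtain ⟨hd1, hdn⟩ := Finset.mem_Icc.mp hd
        have hpd : p ^ d ≤ 1 := pow_le_one₀ hp.le hp1.le
        have hd0 : (1:ℝ) ≤ (d:ℝ) := by exact_mod_cast hd1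
        have hrp : (0:ℝ) ≤ ((2*p)⁻¹) ^ (2*n+2) := by positivity
        have hqd0 : (0:ℝ) ≤ (2*p) ^ d := by positivity
        rw [Real.norm_eq_abs,
          abs_of_nonneg (mul_nonneg (mul_nonneg (div_nonneg (by linarith) (by linarith)) hqd0) hrp)]
        have h1d : (1 - p ^ d) / (d:ℝ) ≤ 1 := by
          rw [div_le_one (by linarith)]
          have := pow_nonneg hp.le d
          linarith
        have hqd : (2*p) ^ d ≤ (2*p) ^ n := pow_le_pow_right₀ hq1.le hdn
        have step1 : (1 - p ^ d) / (d:ℝ) * (2*p) ^ d ≤ (2*p) ^ n :=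
          le_trans (mul_le_mul_of_nonneg_right h1d hqd0) (by simpa using hqd)
        exact mul_le_mul_of_nonneg_right step1 hrp
      have h2 : ∑ d ∈ Finset.Icc 1 n, (2*p) ^ n * ((2*p)⁻¹) ^ (2*n+2)
          = ((n:ℝ) * ((2*p)⁻¹) ^ n) * ((2*p)⁻¹) ^ 2 := by
        rw [Finset.sum_const, Nat.card_Icc]
        simp only [Nat.add_sub_cancel, nsmul_eq_mul]
        rw [hqr, pow_add]
        ring
      exact h2 ▸ h1
    · simpa using hnr.mul_const (((2*p)⁻¹) ^ 2)
  have hfin := (htA.sub htB).add htC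
  rw [sub_zero, add_zero] at hfin
  exact Tendsto.congr (fun n => (key n).symm) hfin

end
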